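/- (Wedderburn decomposition of semisimple circulant rings) Let k be a field, m₁,...,mₙ coprime to char(k), K = k(μ_{m₁},...,μ_{mₙ}), V = μ_{m₁}×...×μ_{mₙ}, and S ⊆ V a set of representatives of the orbits of the coordinatewise Gal(K/k)-action. Then the map f ↦ (f(x))_{x∈S} is a ring isomorphism from k[X₁,...,Xₙ]/(X₁^{m₁}-1,...,Xₙ^{mₙ}-1) onto ⊕_{x∈S} k(x), and [k(x):k] = #Orb(x) for each x ∈ S. -/

import Mathlib

open MvPolynomial

private lemma natCard_sigma' {ι : Type*} [Fintype ι] {β : ι → Type*} [∀ i, Finite (β i)] :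
    Nat.card (Σ i, β i) = ∑ i, Nat.card (β i) := by
  classical
  letI : ∀ i, Fintype (β i) := fun i => Fintype.ofFinite _
  simp [Nat.card_eq_fintype_card, Fintype.card_sigma]

private lemma exists_prim_root' (A : Type*) [Field A] [IsAlgClosed A] (m : ℕ) (hm : 0 < m)
    (h : (m : A) ≠ 0) : ∃ ζ : A, IsPrimitiveRoot ζ m := by
  haveI : NeZero (m : A) := ⟨h⟩
  obtain ⟨r, hr⟩ := IsAlgClosed.exists_root (Polynomial.cyclotomic m A)
    (Polynomial.degree_cyclotomic_pos m A hm).ne'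
  exact ⟨r, (Polynomial.isRoot_cyclotomic_iff).mp hr⟩

private lemma char_indep' {K : Type*} [Field K] {n : ℕ} {m : Fin n → ℕ}
    (ζ : Fin n → K) (hζ : ∀ i, IsPrimitiveRoot (ζ i) (m i))
    (c : (∀ i, Fin (m i)) → K)
    (hc : ∀ y : Fin n → K, (∀ i, y i ^ m i = 1) →
      ∑ a : ∀ i, Fin (m i), c a * ∏ i, y i ^ (a i : ℕ) = 0) :
    c = 0 := by
  classical
  let M : Submonoid (Fin n → K) :=
    { carrier := {y | ∀ i, y i ^ m i = 1}
      one_mem' := fun i => one_pow _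
      mul_mem' := fun {y} {z} hy hz i => by
        simp only [Pi.mul_apply, mul_pow, hy i, hz i, one_mul] }
  let χ : (∀ i, Fin (m i)) → (M →* K) := fun a =>
    { toFun := fun y => ∏ i, (y : Fin n → K) i ^ (a i : ℕ)
      map_one' := by simp
      map_mul' := fun y z => by
        simp [mul_pow, Finset.prod_mul_distrib] }
  have hinj : Function.Injective χ := by
    intro a b hab
    funext i₀
    have hyM : (fun j => if j = i₀ then ζ i₀ else 1) ∈ M := by
      intro j
      by_cases h : j = i₀ <;> simp [h, (hζ i₀).pow_eq_one]
    have := congrArg (fun f : M →* K => f ⟨_, hyM⟩) hab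
    simp only [χ, MonoidHom.coe_mk, OneHom.coe_mk] at this
    rw [Finset.prod_eq_single i₀ (fun j _ hj => by simp [hj])
        (fun h => absurd (Finset.mem_univ i₀) h),
      Finset.prod_eq_single i₀ (fun j _ hj => by simp [hj])
        (fun h => absurd (Finset.mem_univ i₀) h)] at this
    simp only [if_pos rfl] at this
    exact Fin.ext ((hζ i₀).pow_inj (a i₀).2 (b i₀).2 this)
  have li : LinearIndependent K (fun a => ⇑(χ a)) :=
    (linearIndependent_monoidHom M K).comp χ hinj
  have hsum : ∑ a, c a • ⇑(χ a) = 0 := by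
    funext y
    have := hc (y : Fin n → K) y.2
    simpa [Finset.sum_apply, χ] using this
  funext a
  exact Fintype.linearIndependent_iff.mp li c hsum a

private lemma span_monomials' {k : Type*} [Field k] {n : ℕ} (m : Fin n → ℕ) (hm : ∀ i, 0 < m i) :
    Submodule.span k (Set.range fun a : ∀ i, Fin (m i) =>
      (Ideal.Quotient.mk (Ideal.span
          (Set.range fun i : Fin n => (X i : MvPolynomial (Fin n) k) ^ m i - 1)))
        (∏ i, X i ^ (a i : ℕ))) = ⊤ := by
  classical
  set I := Ideal.span (Set.range fun i : Fin n => (X i : MvPolynomial (Fin n) k) ^ m i - 1)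
  set π := Ideal.Quotient.mk I
  set T : Fin n → _ := fun i => π (X i) with hT
  have hTm : ∀ i, T i ^ m i = 1 := by
    intro i
    have : (X i : MvPolynomial (Fin n) k) ^ m i - 1 ∈ I :=
      Ideal.subset_span ⟨i, rfl⟩
    have h := (Ideal.Quotient.eq (I := I)).mpr (by simpa using this)
    simpa [map_pow] using h
  have hmon : ∀ z ∈ Submonoid.closure (Set.range T),
      ∃ b : Fin n → ℕ, z = ∏ i, T i ^ b i := by
    intro z hz
    induction hz using Submonoid.closure_induction with
    | mem z hz =>
      obtain ⟨j, rfl⟩ := hz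
      refine ⟨Pi.single j 1, ?_⟩
      rw [Finset.prod_eq_single j (fun i _ hij => by simp [Pi.single_eq_of_ne hij])
        (fun h => absurd (Finset.mem_univ j) h)]
      simp
    | one => exact ⟨0, by simp⟩
    | mul y z _ _ hy hz =>
      obtain ⟨b, rfl⟩ := hy
      obtain ⟨c, rfl⟩ := hz
      exact ⟨b + c, by simp [pow_add, Finset.prod_mul_distrib]⟩
  have hreduce : ∀ b : Fin n → ℕ, ∃ a : ∀ i, Fin (m i),
      ∏ i, T i ^ b i = ∏ i, T i ^ ((a i : ℕ)) := by
    intro b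
    refine ⟨fun i => ⟨b i % m i, Nat.mod_lt _ (hm i)⟩, Finset.prod_congr rfl fun i _ => ?_⟩
    conv_lhs => rw [← Nat.mod_add_div (b i) (m i)]
    rw [pow_add, pow_mul, hTm i, one_pow, mul_one]
  have hadj : Algebra.adjoin k (Set.range T) = ⊤ := by
    have h1 : Algebra.adjoin k (Set.range (X : Fin n → MvPolynomial (Fin n) k)) = ⊤ :=
      MvPolynomial.adjoin_range_X
    have h2 : Set.range T = (Ideal.Quotient.mkₐ k I) '' Set.range X := by
      rw [← Set.range_comp]; rfl
    rw [h2, ← AlgHom.map_adjoin, h1]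
    exact (Algebra.map_top _).trans ((AlgHom.range_eq_top _).mpr
      (Ideal.Quotient.mkₐ_surjective k I))
  have : (⊤ : Submodule k (MvPolynomial (Fin n) k ⧸ I)) =
      Submodule.span k (Submonoid.closure (Set.range T) : Set _) := by
    rw [← Algebra.adjoin_eq_span, hadj]; rfl
  rw [eq_top_iff, this, Submodule.span_le]
  intro z hz
  obtain ⟨b, rfl⟩ := hmon z hz
  obtain ⟨a, ha⟩ := hreduce b
  rw [ha]
  exact Submodule.subset_span ⟨a, by simp [T, map_prod, map_pow]⟩

private lemma orbit_finrank' {k K : Type*} [Field k] [Field K] [Algebra k K]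
    [FiniteDimensional k K] [IsGalois k K] {n : ℕ} (x : Fin n → K) :
    Module.finrank k (IntermediateField.adjoin k (Set.range x)) =
      Nat.card {y : Fin n → K | ∃ σ : K ≃ₐ[k] K, y = fun i => σ (x i)} := by
  classical
  set L := IntermediateField.adjoin k (Set.range x) with hL
  have hset : {y : Fin n → K | ∃ σ : K ≃ₐ[k] K, y = fun i => σ (x i)} =
      MulAction.orbit (K ≃ₐ[k] K) x := by
    ext y
    constructor
    · rintro ⟨σ, rfl⟩; exact ⟨σ, rfl⟩
    · rintro ⟨σ, rfl⟩; exact ⟨σ, rfl⟩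
  have hstab : MulAction.stabilizer (K ≃ₐ[k] K) x = L.fixingSubgroup := by
    ext σ
    rw [MulAction.mem_stabilizer_iff, IntermediateField.mem_fixingSubgroup_iff]
    constructor
    · intro h z hz
      induction hz using IntermediateField.adjoin_induction with
      | mem z hz => obtain ⟨i, rfl⟩ := hz; exact congrFun h i
      | algebraMap r => exact σ.commutes r
      | add a b _ _ ha hb => rw [map_add, ha, hb]
      | inv a _ ha => rw [map_inv₀, ha]
      | mul a b _ _ ha hb => rw [map_mul, ha, hb]
    · intro h
      funext i
      exact h (x i) (IntermediateField.subset_adjoin _ _ ⟨i, rfl⟩)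
  have horb : Nat.card {y : Fin n → K | ∃ σ : K ≃ₐ[k] K, y = fun i => σ (x i)} =
      L.fixingSubgroup.index := by
    rw [hset, Nat.card_congr (MulAction.orbitEquivQuotientStabilizer (K ≃ₐ[k] K) x), hstab,
      Subgroup.index_eq_card]
  have h1 : Nat.card L.fixingSubgroup * L.fixingSubgroup.index = Nat.card (K ≃ₐ[k] K) :=
    Subgroup.card_mul_index _
  have h2 : Nat.card (K ≃ₐ[k] K) = Module.finrank k K :=
    (IsGalois.card_aut_eq_finrank k K)
  have h3 : Nat.card L.fixingSubgroup = Module.finrank L K := by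
    rw [Nat.card_congr (IntermediateField.fixingSubgroupEquiv L).toEquiv]
    exact IsGalois.card_aut_eq_finrank L K
  have h4 : Module.finrank k L * Module.finrank L K = Module.finrank k K :=
    Module.finrank_mul_finrank k L K
  rw [horb]
  have hpos : 0 < Module.finrank L K := Module.finrank_pos
  apply Nat.eq_of_mul_eq_mul_left hpos
  rw [mul_comm (Module.finrank L K) _, ← h3, h1, h2, ← h4, h3, mul_comm]

set_option maxHeartbeats 2000000 in
theorem stmt_12 {k : Type*} [Field k] (n : ℕ) (m : Fin n → ℕ) (hm : ∀ i, 0 < m i)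
    (hchar : ∀ i, ¬ (ringChar k ∣ m i))
    (K : IntermediateField k (AlgebraicClosure k))
    (hK : K = IntermediateField.adjoin k {z : AlgebraicClosure k | ∃ i, z ^ m i = 1})
    (S : Finset (Fin n → K))
    (hSV : ∀ x ∈ S, ∀ i, x i ^ m i = 1)
    (hrep : ∀ y : Fin n → K, (∀ i, y i ^ m i = 1) →
      ∃! x, x ∈ S ∧ ∃ σ : K ≃ₐ[k] K, y = fun i => σ (x i)) :
    (∃ e : (MvPolynomial (Fin n) k ⧸
              Ideal.span (Set.range fun i : Fin n => (X i : MvPolynomial (Fin n) k) ^ m i - 1)) ≃+*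
            (∀ x : S, (IntermediateField.adjoin k (Set.range (x : Fin n → K)) : IntermediateField k K)),
        ∀ (f : MvPolynomial (Fin n) k) (x : S),
          (e (Ideal.Quotient.mk _ f) x : K) =
            eval (x : Fin n → K) (MvPolynomial.map (algebraMap k K) f)) ∧
    ∀ x ∈ S,
      Module.finrank k (IntermediateField.adjoin k (Set.range x) : IntermediateField k K) =
        Nat.card {y : Fin n → K | ∃ σ : K ≃ₐ[k] K, y = fun i => σ (x i)} := by
  classical
  -- characteristic facts
  have hmk : ∀ i, (m i : k) ≠ 0 := fun i h =>
    hchar i ((CharP.cast_eq_zero_iff k (ringChar k) (m i)).mp h)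
  have hmA : ∀ i, ((m i : ℕ) : AlgebraicClosure k) ≠ 0 := by
    intro i h
    have h2 : algebraMap k (AlgebraicClosure k) (m i : k) = 0 := by
      rw [map_natCast]; exact h
    exact hmk i ((map_eq_zero _).mp h2)
  -- finiteness of the set of roots of unity
  have hfinR : ({z : AlgebraicClosure k | ∃ i, z ^ m i = 1}).Finite := by
    have hsub : {z : AlgebraicClosure k | ∃ i, z ^ m i = 1} ⊆
        ⋃ i, {z : AlgebraicClosure k |
        (Polynomial.X ^ m i - 1 : Polynomial (AlgebraicClosure k)).IsRoot z} := by
      rintro z ⟨i, hz⟩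
      exact Set.mem_iUnion.mpr ⟨i, by simp [Polynomial.IsRoot, sub_eq_zero, hz]⟩
    refine Set.Finite.subset (Set.finite_iUnion fun i =>
      Polynomial.finite_setOf_isRoot ?_) hsub
    simpa using Polynomial.X_pow_sub_C_ne_zero (hm i) (1 : AlgebraicClosure k)
  haveI : Finite ↥{z : AlgebraicClosure k | ∃ i, z ^ m i = 1} := hfinR.to_subtype
  haveI hfd : FiniteDimensional k ↥K := by
    rw [hK]
    exact IntermediateField.finiteDimensional_adjoin fun z _ =>
      (Algebra.IsAlgebraic.isAlgebraic (R := k) z).isIntegral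
  haveI hsepK : Algebra.IsSeparable k ↥K := by
    rw [hK]
    refine (IntermediateField.isSeparable_adjoin_iff_isSeparable k (AlgebraicClosure k)).mpr ?_
    rintro z ⟨i, hzi⟩
    have hdvd : minpoly k z ∣ Polynomial.X ^ m i - 1 :=
      minpoly.dvd k z (by simp [hzi, sub_eq_zero])
    exact (Polynomial.X_pow_sub_one_separable_iff.mpr (hmk i)).of_dvd hdvd
  haveI hnorK : Normal k ↥K := by
    rw [hK]
    refine IntermediateField.normal_iff_forall_map_le'.mpr fun σ => ?_
    rw [IntermediateField.adjoin_map]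
    refine IntermediateField.adjoin.mono _ _ _ ?_
    rintro _ ⟨z, ⟨i, hz⟩, rfl⟩
    exact ⟨i, by rw [← map_pow, hz, map_one]⟩
  haveI hgal : IsGalois k ↥K := {}
  -- primitive roots of unity inside K
  have hzK : ∀ i, ∃ ζ : ↥K, IsPrimitiveRoot ζ (m i) := by
    intro i
    obtain ⟨z, hz⟩ := exists_prim_root' (AlgebraicClosure k) (m i) (hm i) (hmA i)
    have hzmem : z ∈ K := by
      rw [hK]
      exact IntermediateField.subset_adjoin _ _ ⟨i, hz.pow_eq_one⟩
    refine ⟨⟨z, hzmem⟩, ?_⟩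
    refine IsPrimitiveRoot.of_map_of_injective
      (f := algebraMap ↥K (AlgebraicClosure k)) ?_ (algebraMap ↥K (AlgebraicClosure k)).injective
    exact hz
  choose ζ hζ using hzK
  refine ⟨?_, fun x _ =>
    orbit_finrank' x⟩
  -- Part 1: the ring isomorphism
  set I : Ideal (MvPolynomial (Fin n) k) :=
    Ideal.span (Set.range fun i : Fin n => (X i : MvPolynomial (Fin n) k) ^ m i - 1) with hI
  have hspan := span_monomials' (k := k) m hm
  rw [← hI] at hspan
  have hker : ∀ (y : Fin n → ↥K), (∀ i, y i ^ m i = 1) →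
      ∀ f ∈ I, (MvPolynomial.aeval y) f = 0 := by
    intro y hy f hf
    have hle : I ≤ RingHom.ker ((MvPolynomial.aeval (R := k) y).toRingHom) := by
      rw [hI, Ideal.span_le]
      rintro _ ⟨i, rfl⟩
      simp [RingHom.mem_ker, hy i]
    exact hle hf
  let ev : ∀ (y : Fin n → ↥K), (∀ i, y i ^ m i = 1) → ((MvPolynomial (Fin n) k ⧸ I) →ₐ[k] ↥K) :=
    fun y hy => Ideal.Quotient.liftₐ I (MvPolynomial.aeval y) (hker y hy)
  have hev_mk : ∀ y hy f, ev y hy (Ideal.Quotient.mk I f) = MvPolynomial.aeval y f := by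
    intro y hy f
    rfl
  have hev_mon : ∀ y hy (a : ∀ i, Fin (m i)),
      ev y hy (Ideal.Quotient.mk I (∏ i, X i ^ (a i : ℕ))) = ∏ i, y i ^ ((a i : ℕ)) := by
    intro y hy a
    rw [hev_mk y hy]
    simp [map_prod, map_pow]
  have hkey : ∀ c : (∀ i, Fin (m i)) → k,
      (∀ x ∈ S, ∑ a : ∀ i, Fin (m i), algebraMap k ↥K (c a) * ∏ i, x i ^ ((a i : ℕ)) = 0) →
      c = 0 := by
    intro c hc
    have h0 : ∀ y : Fin n → ↥K, (∀ i, y i ^ m i = 1) →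
        ∑ a : ∀ i, Fin (m i), algebraMap k ↥K (c a) * ∏ i, y i ^ ((a i : ℕ)) = 0 := by
      intro y hy
      obtain ⟨x, ⟨hxS, σ, hyx⟩, -⟩ := hrep y hy
      have hyx' : ∀ i, y i = σ (x i) := fun i => congrFun hyx i
      have hx0 := hc x hxS
      calc ∑ a : ∀ i, Fin (m i), algebraMap k ↥K (c a) * ∏ i, y i ^ ((a i : ℕ))
          = σ (∑ a : ∀ i, Fin (m i), algebraMap k ↥K (c a) * ∏ i, x i ^ ((a i : ℕ))) := by
            rw [map_sum]
            refine Finset.sum_congr rfl fun a _ => ?_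
            rw [map_mul, AlgEquiv.commutes, map_prod]
            refine congrArg _ (Finset.prod_congr rfl fun i _ => ?_)
            rw [hyx' i, map_pow]
        _ = 0 := by rw [hx0, map_zero]
    have h1 := char_indep' ζ hζ (fun a => algebraMap k ↥K (c a)) h0
    funext a
    exact (algebraMap k ↥K).injective (by simpa using congrFun h1 a)
  have hli : LinearIndependent k (fun a : ∀ i, Fin (m i) =>
      Ideal.Quotient.mk I (∏ i, X i ^ (a i : ℕ))) := by
    rw [Fintype.linearIndependent_iff]
    intro c hc
    have hc0 : ∀ x ∈ S,
        ∑ a : ∀ i, Fin (m i), algebraMap k ↥K (c a) * ∏ i, x i ^ ((a i : ℕ)) = 0 := by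
      intro x hxS
      have h := congrArg (ev x (hSV x hxS)) hc
      rw [map_sum, map_zero] at h
      rw [← h]
      refine Finset.sum_congr rfl fun a _ => ?_
      rw [map_smul, hev_mon x (hSV x hxS) a, Algebra.smul_def]
    have h2 := hkey c hc0
    intro a
    exact congrFun h2 a
  let bQ : Module.Basis (∀ i, Fin (m i)) k (MvPolynomial (Fin n) k ⧸ I) :=
    Module.Basis.mk hli (by rw [hspan])
  haveI : FiniteDimensional k (MvPolynomial (Fin n) k ⧸ I) := Module.Finite.of_basis bQ
  have hfrQ : Module.finrank k (MvPolynomial (Fin n) k ⧸ I) = ∏ i, m i := by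
    rw [Module.finrank_eq_card_basis bQ]
    simp
  have hmem : ∀ (x : ↥S) (q : MvPolynomial (Fin n) k ⧸ I),
      ev x.1 (hSV x.1 x.2) q ∈ IntermediateField.adjoin k (Set.range (x.1 : Fin n → ↥K)) := by
    intro x q
    obtain ⟨f, rfl⟩ := Ideal.Quotient.mk_surjective q
    rw [hev_mk x.1 (hSV x.1 x.2) f]
    refine IntermediateField.algebra_adjoin_le_adjoin k _ ?_
    rw [Algebra.adjoin_range_eq_range_aeval]
    exact ⟨f, rfl⟩
  let Φc : ∀ x : ↥S, (MvPolynomial (Fin n) k ⧸ I) →ₐ[k]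
      ↥(IntermediateField.adjoin k (Set.range (x.1 : Fin n → ↥K))) := fun x =>
    { toFun := fun q => ⟨ev x.1 (hSV x.1 x.2) q, hmem x q⟩
      map_one' := Subtype.ext (map_one _)
      map_mul' := fun a b => Subtype.ext (map_mul _ a b)
      map_zero' := Subtype.ext (map_zero _)
      map_add' := fun a b => Subtype.ext (map_add _ a b)
      commutes' := fun r => Subtype.ext ((ev x.1 (hSV x.1 x.2)).commutes r) }
  let Φ := Pi.algHom k _ Φc
  have hinj : Function.Injective Φ := by
    rw [injective_iff_map_eq_zero]
    intro q hq
    have hqspan : q ∈ Submodule.span k (Set.range fun a : ∀ i, Fin (m i) =>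
        Ideal.Quotient.mk I (∏ i, X i ^ (a i : ℕ))) := by rw [hspan]; trivial
    obtain ⟨c, hc⟩ := (Submodule.mem_span_range_iff_exists_fun k).mp hqspan
    have hc0 : ∀ x ∈ S,
        ∑ a : ∀ i, Fin (m i), algebraMap k ↥K (c a) * ∏ i, x i ^ ((a i : ℕ)) = 0 := by
      intro x hxS
      have h1 := congrFun hq ⟨x, hxS⟩
      have h2 : ev x (hSV x hxS) q = 0 := congrArg Subtype.val h1
      rw [← hc, map_sum] at h2
      rw [← h2]
      refine Finset.sum_congr rfl fun a _ => ?_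
      rw [map_smul, hev_mon x (hSV x hxS) a, Algebra.smul_def]
    have h3 := hkey c hc0
    rw [← hc]
    simp [h3]
  have hfrT : Module.finrank k
        (∀ x : ↥S, ↥(IntermediateField.adjoin k (Set.range (x.1 : Fin n → ↥K)))) =
      ∑ x : ↥S, Module.finrank k ↥(IntermediateField.adjoin k (Set.range (x.1 : Fin n → ↥K))) :=
    Module.finrank_pi_fintype k
  have hcardV : Nat.card {y : Fin n → ↥K // ∀ i, y i ^ m i = 1} = ∏ i, m i := by
    rw [Nat.card_congr (Equiv.subtypePiEquivPi (p := fun i (z : ↥K) => z ^ m i = 1)), Nat.card_pi]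
    refine Finset.prod_congr rfl fun i _ => ?_
    have hset2 : {z : ↥K | z ^ m i = 1} = ↑(Polynomial.nthRootsFinset (m i) (1 : ↥K)) := by
      ext z
      simp [Polynomial.mem_nthRootsFinset (hm i) (1 : ↥K)]
    calc Nat.card {z : ↥K // z ^ m i = 1}
        = Set.ncard {z : ↥K | z ^ m i = 1} := (Nat.card_coe_set_eq _).symm
      _ = (Polynomial.nthRootsFinset (m i) (1 : ↥K)).card := by rw [hset2, Set.ncard_coe_finset]
      _ = m i := (hζ i).card_nthRootsFinset
  have horbmem : ∀ (x : ↥S) (y : Fin n → ↥K),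
      (∃ σ : ↥K ≃ₐ[k] ↥K, y = fun i => σ (x.1 i)) → ∀ i, y i ^ m i = 1 := by
    rintro x y ⟨σ, rfl⟩ i
    rw [← map_pow, hSV x.1 x.2 i, map_one]
  haveI hfinorb : ∀ x : ↥S,
      Finite ↥{y : Fin n → ↥K | ∃ σ : ↥K ≃ₐ[k] ↥K, y = fun i => σ (x.1 i)} := by
    intro x
    refine Set.Finite.to_subtype (Set.Finite.subset
      (Set.finite_range fun σ : ↥K ≃ₐ[k] ↥K => fun i => σ (x.1 i)) ?_)
    rintro y ⟨σ, rfl⟩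
    exact ⟨σ, rfl⟩
  have hsig : ∀ (a b : Σ x : ↥S,
      ↥{y : Fin n → ↥K | ∃ σ : ↥K ≃ₐ[k] ↥K, y = fun i => σ (x.1 i)}),
      a.1 = b.1 → (a.2 : Fin n → ↥K) = b.2 → a = b := by
    rintro ⟨a1, a2⟩ ⟨b1, b2⟩ h1 h2
    subst h1
    simp only at h2 ⊢
    exact congrArg _ (Subtype.ext h2)
  let E : {y : Fin n → ↥K // ∀ i, y i ^ m i = 1} ≃
      Σ x : ↥S, ↥{y : Fin n → ↥K | ∃ σ : ↥K ≃ₐ[k] ↥K, y = fun i => σ (x.1 i)} :=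
    { toFun := fun y => ⟨⟨(hrep y.1 y.2).choose, ((hrep y.1 y.2).choose_spec.1).1⟩,
        ⟨y.1, ((hrep y.1 y.2).choose_spec.1).2⟩⟩
      invFun := fun p => ⟨p.2.1, horbmem p.1 p.2.1 p.2.2⟩
      left_inv := fun y => rfl
      right_inv := fun p => by
        refine hsig _ _ ?_ rfl
        exact Subtype.ext
          (((hrep p.2.1 (horbmem p.1 p.2.1 p.2.2)).choose_spec.2
            p.1.1 ⟨p.1.2, p.2.2⟩).symm) }
  have hsum2 : (∑ x : ↥S,
      Nat.card ↥{y : Fin n → ↥K | ∃ σ : ↥K ≃ₐ[k] ↥K, y = fun i => σ (x.1 i)}) = ∏ i, m i := by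
    rw [← natCard_sigma', ← Nat.card_congr E]
    exact hcardV
  have hfr : Module.finrank k (MvPolynomial (Fin n) k ⧸ I) =
      Module.finrank k
        (∀ x : ↥S, ↥(IntermediateField.adjoin k (Set.range (x.1 : Fin n → ↥K)))) := by
    rw [hfrQ, hfrT, ← hsum2]
    refine Finset.sum_congr rfl fun x _ => ?_
    exact (orbit_finrank' x.1).symm
  have hsurj : Function.Surjective Φ :=
    (LinearMap.injective_iff_surjective_of_finrank_eq_finrank (f := Φ.toLinearMap) hfr).mp hinj
  refine ⟨(AlgEquiv.ofBijective Φ ⟨hinj, hsurj⟩).toRingEquiv, ?_⟩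
  intro f x
  show ((Φc x (Ideal.Quotient.mk I f) : ↥K)) = _
  rw [show ((Φc x (Ideal.Quotient.mk I f) : ↥K))
      = ev x.1 (hSV x.1 x.2) (Ideal.Quotient.mk I f) from rfl,
    hev_mk x.1 (hSV x.1 x.2) f]
  simp [MvPolynomial.eval_map, MvPolynomial.aeval_def]
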